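/- For θ, κ ∈ F_{q^3}^* with N(θ) = N(κ) (where N(x)=x^{q^2+q+1}), the point sets Π_θ = {(rθ^{q+1}, r^q, r^{q^2}θ) : r ∈ F_{q^3}^*} and Π_κ = {(rκ^{q+1}, r^q, r^{q^2}κ) : r ∈ F_{q^3}^*}, viewed as sets of projective points of PG(2,q^3), are equal. -/

import Mathlib

/-- In a finite field of cardinality `q^3`, every nonzero `ν` with `ν^(q^2+q+1) = 1`
is a `(q-1)`-th power of a nonzero element. -/
lemma exists_pow_q_sub_one_eq (q : ℕ) (hq : 1 ≤ q) {F : Type*} [Field F] [Fintype F]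
    (hF : Fintype.card F = q ^ 3) (ν : F) (hν : ν ≠ 0) (h1 : ν ^ (q ^ 2 + q + 1) = 1) :
    ∃ t : F, t ≠ 0 ∧ t ^ (q - 1) = ν := by
  set m := q ^ 2 + q + 1 with hm
  have hcard : Nat.card Fˣ = (q - 1) * m := by
    have h3 : (q - 1) * m + 1 = q ^ 3 := by
      obtain ⟨p, rfl⟩ : ∃ p, q = p + 1 := ⟨q - 1, (Nat.succ_pred_eq_of_pos hq).symm⟩
      simp only [hm, Nat.add_sub_cancel]; ring
    have h4 : Nat.card Fˣ = q ^ 3 - 1 := by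
      rw [Nat.card_units, Nat.card_eq_fintype_card, hF]
    omega
  set u : Fˣ := Units.mk0 ν hν with hu
  have hu1 : u ^ m = 1 := Units.ext (by simpa [hu] using h1)
  obtain ⟨g, hg⟩ := IsCyclic.exists_generator (α := Fˣ)
  have horder : orderOf g = (q - 1) * m := by
    rw [orderOf_eq_card_of_forall_mem_zpowers hg, hcard]
  obtain ⟨k, hk⟩ := hg u
  have hk' : g ^ k = u := hk
  have hdvd : ((orderOf g : ℤ)) ∣ k * m := by
    rw [orderOf_dvd_iff_zpow_eq_one]
    have h5 : (g ^ k) ^ (m : ℤ) = 1 := by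
      rw [hk', zpow_natCast]; exact hu1
    rw [← zpow_mul] at h5; exact h5
  rw [horder] at hdvd
  have hm0 : (m : ℤ) ≠ 0 := by positivity
  have hdvd2 : ((q - 1 : ℕ) : ℤ) ∣ k := by
    push_cast at hdvd
    exact (mul_dvd_mul_iff_right hm0).mp hdvd
  obtain ⟨j, hj⟩ := hdvd2
  have hgu : (g ^ j) ^ (q - 1) = u := by
    rw [← zpow_natCast (g ^ j) (q - 1), ← zpow_mul, mul_comm, ← hj, hk']
  refine ⟨((g ^ j : Fˣ) : F), Units.ne_zero _, ?_⟩
  calc ((g ^ j : Fˣ) : F) ^ (q - 1) = (((g ^ j) ^ (q - 1) : Fˣ) : F) :=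
        (Units.val_pow_eq_pow_val _ _).symm
    _ = (u : F) := by rw [hgu]
    _ = ν := rfl

lemma Tplane_subset (q : ℕ) (hq2 : 2 ≤ q) (F : Type*) [Field F] [Fintype F]
    (hF : Fintype.card F = q ^ 3) (θ κ : F) (hθ : θ ≠ 0) (hκ : κ ≠ 0)
    (h : θ ^ (q ^ 2 + q + 1) = κ ^ (q ^ 2 + q + 1)) :
    {P : Projectivization F (F × F × F) | ∃ r : F,
        ∃ hr : ((r * θ ^ (q + 1), r ^ q, r ^ (q ^ 2) * θ) : F × F × F) ≠ 0,
        r ≠ 0 ∧ P = Projectivization.mk F (r * θ ^ (q + 1), r ^ q, r ^ (q ^ 2) * θ) hr} ⊆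
      {P : Projectivization F (F × F × F) | ∃ r : F,
        ∃ hr : ((r * κ ^ (q + 1), r ^ q, r ^ (q ^ 2) * κ) : F × F × F) ≠ 0,
        r ≠ 0 ∧ P = Projectivization.mk F (r * κ ^ (q + 1), r ^ q, r ^ (q ^ 2) * κ) hr} := by
  intro P hP
  obtain ⟨r, hr, hr0, rfl⟩ := hP
  -- find t with t^(q-1) = (κ/θ)^(q+1)
  have hν : (κ * θ⁻¹) ^ (q + 1) ≠ 0 := pow_ne_zero _ (mul_ne_zero hκ (inv_ne_zero hθ))
  have h1 : ((κ * θ⁻¹) ^ (q + 1)) ^ (q ^ 2 + q + 1) = 1 := by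
    rw [← pow_mul, mul_comm (q + 1), pow_mul, mul_pow, inv_pow, ← h]
    field_simp
    exact one_pow _
  obtain ⟨t, ht0, ht⟩ := exists_pow_q_sub_one_eq q (by omega) hF _ hν h1
  have ht' : t ^ (q - 1) * θ ^ (q + 1) = κ ^ (q + 1) := by
    rw [ht, mul_pow, inv_pow]
    field_simp
  obtain ⟨p, rfl⟩ : ∃ p, q = p + 2 := ⟨q - 2, by omega⟩
  rw [show p + 2 - 1 = p + 1 from rfl, show p + 2 + 1 = p + 3 from by omega] at ht'
  -- ht' : t ^ (p+1) * θ ^ (p+3) = κ ^ (p+3)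
  have hs0 : t * r ≠ 0 := mul_ne_zero ht0 hr0
  have htq0 : t ^ (p + 2) ≠ 0 := pow_ne_zero _ ht0
  refine ⟨t * r, ?_, hs0, ?_⟩
  · simp only [Ne, Prod.mk_eq_zero, not_and]
    intro _ h2
    exact absurd h2 (pow_ne_zero _ hs0)
  · rw [Projectivization.mk_eq_mk_iff]
    refine ⟨(Units.mk0 (t ^ (p + 2)) htq0)⁻¹, ?_⟩
    rw [inv_smul_eq_iff]
    have key3 : t ^ ((p + 2) ^ 2) * θ ^ ((p + 2) ^ 2 + (p + 2)) =
        t ^ (p + 2) * κ ^ ((p + 2) ^ 2 + (p + 2)) := by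
      have h2 : (t ^ (p + 1) * θ ^ (p + 3)) ^ (p + 2) = (κ ^ (p + 3)) ^ (p + 2) := by
        rw [ht']
      linear_combination t ^ (p + 2) * h2
    have hθp : θ ^ ((p + 2) ^ 2 + (p + 2)) ≠ 0 := pow_ne_zero _ hθ
    have hh : θ ^ ((p + 2) ^ 2 + (p + 2) + 1) = κ ^ ((p + 2) ^ 2 + (p + 2) + 1) := h
    ext
    · show t * r * κ ^ (p + 2 + 1) = t ^ (p + 2) * (r * θ ^ (p + 2 + 1))
      rw [show p + 2 + 1 = p + 3 from by omega]
      linear_combination (-(t * r)) * ht'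
    · show (t * r) ^ (p + 2) = t ^ (p + 2) * r ^ (p + 2)
      rw [mul_pow]
    · show (t * r) ^ ((p + 2) ^ 2) * κ = t ^ (p + 2) * (r ^ ((p + 2) ^ 2) * θ)
      apply mul_right_cancel₀ hθp
      linear_combination r ^ ((p + 2) ^ 2) * κ * key3 - t ^ (p + 2) * r ^ ((p + 2) ^ 2) * hh

/-- If N(θ) = N(κ), then the T-planes Π_θ and Π_κ are equal as sets of projective
points of PG(2,q^3). -/
theorem Tplane_eq_of_norm_eq (q : ℕ) (hq : IsPrimePow q) (F : Type*) [Field F] [Fintype F]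
    (hF : Fintype.card F = q ^ 3) (θ κ : F) (hθ : θ ≠ 0) (hκ : κ ≠ 0)
    (h : θ ^ (q ^ 2 + q + 1) = κ ^ (q ^ 2 + q + 1)) :
    {P : Projectivization F (F × F × F) | ∃ r : F,
        ∃ hr : ((r * θ ^ (q + 1), r ^ q, r ^ (q ^ 2) * θ) : F × F × F) ≠ 0,
        r ≠ 0 ∧ P = Projectivization.mk F (r * θ ^ (q + 1), r ^ q, r ^ (q ^ 2) * θ) hr} =
      {P : Projectivization F (F × F × F) | ∃ r : F,
        ∃ hr : ((r * κ ^ (q + 1), r ^ q, r ^ (q ^ 2) * κ) : F × F × F) ≠ 0,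
        r ≠ 0 ∧ P = Projectivization.mk F (r * κ ^ (q + 1), r ^ q, r ^ (q ^ 2) * κ) hr} := by
  exact Set.Subset.antisymm
    (Tplane_subset q hq.two_le F hF θ κ hθ hκ h)
    (Tplane_subset q hq.two_le F hF κ θ hκ hθ h.symm)
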